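/- Let z be an infinite word, n ≥ 2, and suppose w₁ = z[i..i+n-1] = x₁^{p₁} and w₂ = z[j..j+n-1] = x₂^{p₂} with x₁, x₂ primitive, p₁, p₂ ≥ 2, and i < j ≤ i + n/3. Then |x₁| = |x₂|. -/

import Mathlib

/-- The factor x[i..i+n-1] of the infinite word x, as a list. -/
def factor {A : Type*} (x : ℕ → A) (i n : ℕ) : List A :=
  (List.range n).map fun t => x (i + t)

/-- The occurrence of the length-n factor at position i is novel. -/
def novel {A : Type*} (x : ℕ → A) (i n : ℕ) : Prop :=
  ∀ j < i, factor x j n ≠ factor x i n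

/-- The set of positions of novel occurrences of length-n factors. -/
def novelSet {A : Type*} (x : ℕ → A) (n : ℕ) : Set ℕ := {i | novel x i n}

/-- x^k : the word x repeated k times. -/
def wpow {A : Type*} (x : List A) : ℕ → List A
  | 0 => []
  | k + 1 => x ++ wpow x k

/-- A word is a power if it is x^k for some word x and k ≥ 2. -/
def isPower {A : Type*} (w : List A) : Prop := ∃ x k, 2 ≤ k ∧ w = wpow x k

/-- w has period p. -/
def hasPeriod {A : Type*} (w : List A) (p : ℕ) : Prop :=
  ∀ i, i + p < w.length → w[i + p]? = w[i]?

/-- u and v are conjugate words. -/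
def conjugate {A : Type*} (u v : List A) : Prop := ∃ s t, u = s ++ t ∧ v = t ++ s

/-- A nonempty word is primitive if it is not a power. -/
def primitive {A : Type*} (x : List A) : Prop := x ≠ [] ∧ ¬ isPower x

/-- period of a function on an initial segment -/
def per {A : Type*} (f : ℕ → A) (L r : ℕ) : Prop := ∀ t, t + r < L → f (t + r) = f t

lemma wpow_length {A : Type*} (x : List A) (k : ℕ) : (wpow x k).length = k * x.length := by
  induction k with
  | zero => simp [wpow]
  | succ k ih => simp [wpow, ih]; ring

lemma wpow_getElem? {A : Type*} (x : List A) (k t : ℕ) (ht : t < k * x.length) :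
    (wpow x k)[t]? = x[t % x.length]? := by
  induction k generalizing t with
  | zero => omega
  | succ k ih =>
    show (x ++ wpow x k)[t]? = _
    rcases Nat.eq_zero_or_pos x.length with h0 | h0
    · simp [h0] at ht
    have hkl : (k + 1) * x.length = k * x.length + x.length := by ring
    rcases lt_or_ge t x.length with h | h
    · rw [List.getElem?_append_left h, Nat.mod_eq_of_lt h]
    · rw [List.getElem?_append_right h, ih _ (by omega), Nat.mod_eq_sub_mod h]

lemma factor_length {A : Type*} (z : ℕ → A) (a n : ℕ) : (factor z a n).length = n := by
  simp [factor]

lemma factor_getElem? {A : Type*} (z : ℕ → A) (a n t : ℕ) :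
    (factor z a n)[t]? = if t < n then some (z (a + t)) else none := by
  simp [factor, List.getElem?_range]
  split <;> simp_all [List.getElem?_eq_none]

lemma per_mod {A : Type*} (f : ℕ → A) (L r : ℕ) (hr : 0 < r) (h : per f L r) :
    ∀ t, t < L → f t = f (t % r) := by
  intro t
  induction t using Nat.strong_induction_on with
  | _ t ih =>
    intro ht
    rcases lt_or_ge t r with h1 | h1
    · rw [Nat.mod_eq_of_lt h1]
    · have ht' : (t - r) + r = t := by omega
      have := h (t - r) (by omega)
      rw [ht'] at this
      rw [this, ih (t - r) (by omega) (by omega), Nat.mod_eq_sub_mod h1]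

lemma factor_eq_wpow {A : Type*} (z : ℕ → A) (a r m : ℕ) (hr : 0 < r)
    (hper : per (fun t => z (a + t)) (r * m) r) :
    factor z a (r * m) = wpow (factor z a r) m := by
  apply List.ext_getElem?
  intro t
  have hcomm : m * r = r * m := Nat.mul_comm m r
  rcases lt_or_ge t (r * m) with h | h
  · rw [factor_getElem?, if_pos h, wpow_getElem?, factor_getElem?, factor_length]
    · rw [if_pos (Nat.mod_lt _ hr)]
      have := per_mod _ _ _ hr hper t h
      rw [this]
    · rw [factor_length]; omega
  · rw [factor_getElem?, if_neg (by omega), List.getElem?_eq_none]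
    rw [wpow_length, factor_length]; omega

lemma fine_wilf {A : Type*} :
    ∀ s (p q L : ℕ) (f : ℕ → A), p + q ≤ s → 0 < p → 0 < q →
      p + q ≤ L + Nat.gcd p q → per f L p → per f L q → per f L (Nat.gcd p q) := by
  intro s
  induction s with
  | zero => intro p q L f h hp hq _ _ _; omega
  | succ s ih =>
    intro p q L f hs hp hq hL hP hQ
    have core : ∀ (p q : ℕ), p < q → 0 < p → p + q ≤ s + 1 →
        p + q ≤ L + Nat.gcd p q → per f L p → per f L q → per f L (Nat.gcd p q) := by
      intro p q hlt hp hs hL hP hQ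
      set h := q - p with hh
      have hq' : q = h + p := by omega
      have hg : Nat.gcd p q = Nat.gcd p h := by rw [hq', Nat.gcd_add_self_right]
      set g := Nat.gcd p h with hgd
      have hgp : g ∣ p := Nat.gcd_dvd_left p h
      have hgh : g ∣ h := Nat.gcd_dvd_right p h
      have hgpos : 0 < g := Nat.gcd_pos_of_pos_left _ hp
      have hgle : g ≤ p := Nat.le_of_dvd hp hgp
      have hgleh : g ≤ h := Nat.le_of_dvd (by omega) hgh
      have hP' : per f (L - p) p := fun t ht => hP t (by omega)
      have hQ' : per f (L - p) h := by
        intro t ht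
        have h1 : f (t + h + p) = f (t + h) := hP (t + h) (by omega)
        have h2 : f (t + q) = f t := hQ t (by omega)
        have h3 : t + h + p = t + q := by omega
        rw [h3] at h1
        rw [← h1, h2]
      have hpre : per f (L - p) g :=
        ih p h (L - p) f (by omega) hp (by omega) (by rw [← hgd]; omega) hP' hQ'
      rw [hg]
      intro t ht
      have hLp : p ≤ L - p := by omega
      have e1 : f (t + g) = f ((t + g) % p) := per_mod f L p hp hP (t + g) ht
      have e2 : f t = f (t % p) := per_mod f L p hp hP t (by omega)
      have e3 : f ((t + g) % p) = f (((t + g) % p) % g) :=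
        per_mod f (L - p) g hgpos hpre _ (by have := Nat.mod_lt (t + g) hp; omega)
      have e4 : f (t % p) = f ((t % p) % g) :=
        per_mod f (L - p) g hgpos hpre _ (by have := Nat.mod_lt t hp; omega)
      rw [e1, e2, e3, e4, Nat.mod_mod_of_dvd _ hgp, Nat.mod_mod_of_dvd _ hgp,
        Nat.add_mod_right]
    rcases Nat.lt_trichotomy p q with h | h | h
    · exact core p q h hp hs hL hP hQ
    · subst h
      rw [Nat.gcd_self]; exact hP
    · have := core q p h hq (by omega) (by rw [Nat.gcd_comm]; omega) hQ hP
      rwa [Nat.gcd_comm]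

theorem primitive_roots_same_length {A : Type*} (z : ℕ → A) (n i j p₁ p₂ : ℕ)
    (x₁ x₂ : List A) (hn : 2 ≤ n)
    (hx₁ : primitive x₁) (hx₂ : primitive x₂)
    (hp₁ : 2 ≤ p₁) (hp₂ : 2 ≤ p₂)
    (hw₁ : factor z i n = wpow x₁ p₁) (hw₂ : factor z j n = wpow x₂ p₂)
    (hij : i < j) (hj3 : j ≤ i + n / 3) :
    x₁.length = x₂.length := by
  set q₁ := x₁.length with hq₁def
  set q₂ := x₂.length with hq₂def
  have hq₁ : 0 < q₁ := List.length_pos_iff.mpr hx₁.1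
  have hq₂ : 0 < q₂ := List.length_pos_iff.mpr hx₂.1
  have hn₁ : n = p₁ * q₁ := by
    have := congrArg List.length hw₁
    rwa [factor_length, wpow_length] at this
  have hn₂ : n = p₂ * q₂ := by
    have := congrArg List.length hw₂
    rwa [factor_length, wpow_length] at this
  -- characterization of letters in each window
  have h₁ : ∀ t, t < n → (some (z (i + t)) : Option A) = x₁[t % q₁]? := by
    intro t ht
    have := congrArg (fun l => l[t]?) hw₁
    rwa [factor_getElem?, if_pos ht,
      wpow_getElem? _ _ _ (show t < p₁ * q₁ by omega)] at this
  have h₂ : ∀ t, t < n → (some (z (j + t)) : Option A) = x₂[t % q₂]? := by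
    intro t ht
    have := congrArg (fun l => l[t]?) hw₂
    rwa [factor_getElem?, if_pos ht,
      wpow_getElem? _ _ _ (show t < p₂ * q₂ by omega)] at this
  have per₁ : per (fun t => z (i + t)) n q₁ := by
    intro t ht
    have e1 := h₁ (t + q₁) ht
    have e2 := h₁ t (by omega)
    rw [Nat.add_mod_right] at e1
    exact Option.some.inj (e1.trans e2.symm)
  have per₂ : per (fun t => z (j + t)) n q₂ := by
    intro t ht
    have e1 := h₂ (t + q₂) ht
    have e2 := h₂ t (by omega)
    rw [Nat.add_mod_right] at e1
    exact Option.some.inj (e1.trans e2.symm)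
  have h2q₁ : 2 * q₁ ≤ n := by
    have : 2 * q₁ ≤ p₁ * q₁ := Nat.mul_le_mul_right _ hp₁
    omega
  have h2q₂ : 2 * q₂ ≤ n := by
    have : 2 * q₂ ≤ p₂ * q₂ := Nat.mul_le_mul_right _ hp₂
    omega
  have hroot₁ : x₁ = factor z i q₁ := by
    apply List.ext_getElem?
    intro s
    rw [factor_getElem?]
    split
    · next hs =>
      have hs' : s < q₁ := hs
      have := h₁ s (by omega)
      rw [Nat.mod_eq_of_lt hs] at this
      exact this.symm
    · next hs => exact List.getElem?_eq_none (show q₁ ≤ s by omega)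
  have hroot₂ : x₂ = factor z j q₂ := by
    apply List.ext_getElem?
    intro s
    rw [factor_getElem?]
    split
    · next hs =>
      have hs' : s < q₂ := hs
      have := h₂ s (by omega)
      rw [Nat.mod_eq_of_lt hs] at this
      exact this.symm
    · next hs => exact List.getElem?_eq_none (show q₂ ≤ s by omega)
  -- basic arithmetic
  set d := j - i with hddef
  set L := n - d with hLdef
  have hd3 : 3 * d ≤ n := by omega
  -- periods on the overlap [j, i + n)
  have perO₂ : per (fun t => z (j + t)) L q₂ := fun t ht => per₂ t (by omega)
  have perO₁ : per (fun t => z (j + t)) L q₁ := by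
    intro t ht
    have e := per₁ (d + t) (by omega)
    simp only at e ⊢
    have e1 : j + (t + q₁) = i + (d + t + q₁) := by omega
    have e2 : j + t = i + (d + t) := by omega
    rw [e1, e2]
    exact e
  by_contra hne
  -- gcd and its lower bound
  set g := Nat.gcd q₁ q₂ with hgdef
  have hgq₁ : g ∣ q₁ := Nat.gcd_dvd_left _ _
  have hgq₂ : g ∣ q₂ := Nat.gcd_dvd_right _ _
  have hgpos : 0 < g := Nat.gcd_pos_of_pos_left _ hq₁
  have hgle₁ : g ≤ q₁ := Nat.le_of_dvd hq₁ hgq₁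
  have hgle₂ : g ≤ q₂ := Nat.le_of_dvd hq₂ hgq₂
  have hppne : p₁ ≠ p₂ := by
    intro hpe
    apply hne
    apply Nat.eq_of_mul_eq_mul_left (show 0 < p₁ by omega)
    rw [← hn₁, hpe, ← hn₂]
  set m := Nat.lcm p₁ p₂ with hmdef
  have hmn : m ∣ n := Nat.lcm_dvd ⟨q₁, hn₁⟩ ⟨q₂, hn₂⟩
  set g₀ := n / m with hg₀def
  have hmpos : 0 < m := Nat.lcm_pos (by omega) (by omega)
  have hg₀ : m * g₀ = n := Nat.mul_div_cancel' hmn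
  have hd₀ : Nat.gcd p₁ p₂ * m = p₁ * p₂ := Nat.gcd_mul_lcm p₁ p₂
  have hd₀pos : 0 < Nat.gcd p₁ p₂ := Nat.gcd_pos_of_pos_left _ (by omega)
  have hg₀q₁ : g₀ ∣ q₁ := by
    obtain ⟨c, hc⟩ := Nat.dvd_lcm_left p₁ p₂
    refine ⟨c, ?_⟩
    apply Nat.eq_of_mul_eq_mul_left (show 0 < p₁ by omega)
    rw [← hn₁]
    calc n = m * g₀ := hg₀.symm
      _ = p₁ * c * g₀ := by rw [← hc]
      _ = p₁ * (c * g₀) := by ring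
      _ = p₁ * (g₀ * c) := by ring
  have hg₀q₂ : g₀ ∣ q₂ := by
    obtain ⟨c, hc⟩ := Nat.dvd_lcm_right p₁ p₂
    refine ⟨c, ?_⟩
    apply Nat.eq_of_mul_eq_mul_left (show 0 < p₂ by omega)
    rw [← hn₂]
    calc n = m * g₀ := hg₀.symm
      _ = p₂ * c * g₀ := by rw [← hc]
      _ = p₂ * (g₀ * c) := by ring
  have hg₀g : g₀ ≤ g := Nat.le_of_dvd hgpos (Nat.dvd_gcd hg₀q₁ hg₀q₂)
  -- key numeric inequality
  have hkeyab : ∀ a b : ℕ, 2 ≤ a → a < b → 3 * (a + b) ≤ 2 * (a * b) + 3 := by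
    intro a b ha hab
    rcases Nat.lt_or_ge a 3 with h3 | h3
    · have ha2 : a = 2 := by omega
      subst ha2
      omega
    · have hb : 3 * b ≤ a * b := Nat.mul_le_mul_right b h3
      omega
  have hkey : 3 * (p₁ + p₂) ≤ 2 * (p₁ * p₂) + 3 * Nat.gcd p₁ p₂ := by
    rcases Nat.lt_trichotomy p₁ p₂ with h | h | h
    · have := hkeyab p₁ p₂ hp₁ h
      omega
    · exact absurd h hppne
    · have := hkeyab p₂ p₁ hp₂ h
      have e : p₂ * p₁ = p₁ * p₂ := Nat.mul_comm _ _
      omega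
  have step : (3 * (q₁ + q₂)) * (p₁ * p₂) ≤ (2 * n + 3 * g₀) * (p₁ * p₂) := by
    have e1 : (3 * (q₁ + q₂)) * (p₁ * p₂) = 3 * (p₁ + p₂) * n := by
      calc (3 * (q₁ + q₂)) * (p₁ * p₂) = 3 * ((p₁ * q₁) * p₂ + (p₂ * q₂) * p₁) := by ring
        _ = 3 * (n * p₂ + n * p₁) := by rw [← hn₁, ← hn₂]
        _ = 3 * (p₁ + p₂) * n := by ring
    have e2 : (2 * n + 3 * g₀) * (p₁ * p₂) = (2 * (p₁ * p₂) + 3 * Nat.gcd p₁ p₂) * n := by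
      calc (2 * n + 3 * g₀) * (p₁ * p₂) = 2 * n * (p₁ * p₂) + 3 * (g₀ * (Nat.gcd p₁ p₂ * m)) := by
            rw [hd₀]; ring
        _ = 2 * n * (p₁ * p₂) + 3 * (Nat.gcd p₁ p₂ * (m * g₀)) := by ring
        _ = 2 * n * (p₁ * p₂) + 3 * (Nat.gcd p₁ p₂ * n) := by rw [hg₀]
        _ = (2 * (p₁ * p₂) + 3 * Nat.gcd p₁ p₂) * n := by ring
    rw [e1, e2]
    exact Nat.mul_le_mul_right n hkey
  have hmain : 3 * (q₁ + q₂) ≤ 2 * n + 3 * g₀ :=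
    Nat.le_of_mul_le_mul_right step (by positivity)
  have hLbound : q₁ + q₂ ≤ L + g := by omega
  -- Fine and Wilf on the overlap
  have perG : per (fun t => z (j + t)) L g :=
    fine_wilf (q₁ + q₂) q₁ q₂ L _ le_rfl hq₁ hq₂ hLbound perO₁ perO₂
  -- case analysis
  rcases Nat.lt_trichotomy q₁ q₂ with hlt | heq | hgt
  · -- x₂ is a power: contradiction
    obtain ⟨k, hk0⟩ := hgq₂
    have hk : g * k = q₂ := hk0.symm
    have hk2 : 2 ≤ k := by
      rcases k with _ | _ | k2
      · rw [Nat.mul_zero] at hk; omega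
      · rw [Nat.mul_one] at hk; omega
      · omega
    have hper' : per (fun t => z (j + t)) (g * k) g := by
      intro t ht
      exact perG t (by omega)
    have hpow : x₂ = wpow (factor z j g) k := by
      rw [hroot₂, show q₂ = g * k from hk.symm]
      exact factor_eq_wpow z j g k hgpos hper'
    exact hx₂.2 ⟨factor z j g, k, hk2, hpow⟩
  · exact hne heq
  · -- x₁ is a power: contradiction
    set a := i + (n - q₁) with hadef
    have hroot₁' : x₁ = factor z a q₁ := by
      apply List.ext_getElem?
      intro s
      rw [factor_getElem?]
      split
      · next hs =>
        have hnq2 : n - q₁ + s = q₁ * (p₁ - 1) + s := by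
          have hq : q₁ * (p₁ - 1) + q₁ = n := by
            calc q₁ * (p₁ - 1) + q₁ = q₁ * (p₁ - 1 + 1) := by ring
              _ = q₁ * p₁ := by congr 1; omega
              _ = n := by rw [hn₁, Nat.mul_comm]
          omega
        have hm' : (n - q₁ + s) % q₁ = s := by
          rw [hnq2, Nat.mul_add_mod, Nat.mod_eq_of_lt hs]
        have e : a + s = i + (n - q₁ + s) := by omega
        have e2 := h₁ (n - q₁ + s) (by omega)
        rw [hm'] at e2
        rw [e]
        exact e2.symm
      · next hs => exact List.getElem?_eq_none (show q₁ ≤ s by omega)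
    obtain ⟨k, hk0⟩ := hgq₁
    have hk : g * k = q₁ := hk0.symm
    have hk2 : 2 ≤ k := by
      rcases k with _ | _ | k2
      · rw [Nat.mul_zero] at hk; omega
      · rw [Nat.mul_one] at hk; omega
      · omega
    have hper' : per (fun t => z (a + t)) (g * k) g := by
      intro t ht
      have htq : t + g < q₁ := by omega
      have e1 : a + (t + g) = j + ((n - q₁ - d + t) + g) := by omega
      have e2 : a + t = j + (n - q₁ - d + t) := by omega
      simp only
      rw [e1, e2]
      exact perG (n - q₁ - d + t) (by omega)
    have hpow : x₁ = wpow (factor z a g) k := by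
      rw [hroot₁', show q₁ = g * k from hk.symm]
      exact factor_eq_wpow z a g k hgpos hper'
    exact hx₁.2 ⟨factor z a g, k, hk2, hpow⟩
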